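/- Let Z be a measurable space, n ≥ 1, p ≥ 1, and let ε, δ ∈ (0,1) and α > 0. Let θ̂ : Z^n → ℝ^p be a measurable estimator, let G ⊆ Z^n be a set such that for every X ∈ G and every neighbor X' of X one has ‖θ̂(X) − θ̂(X')‖ ≤ α, and let γ : Z^n → [0,∞) be a sub-distance to the complement of G, i.e. |γ(X) − γ(X')| ≤ D_H(X,X') for all X, X' ∈ Z^n and γ(X) > 0 implies X ∈ G. Then for any probability measure π_⊥ on ℝ^p, the ePTR mechanism built from (ε, δ, α, θ̂, γ, π_⊥) is (ε,δ)-differentially private: for all neighboring datasets X, X' and every Borel set B ⊆ ℝ^p, μ_X(B) ≤ e^ε · μ_{X'}(B) + δ. -/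

import Mathlib

open MeasureTheory ProbabilityTheory Matrix
open scoped Classical NNReal ENNReal RealInnerProductSpace

noncomputable section

namespace EPTR

variable {Z : Type*}

/-- Hamming distance between two datasets of size `n`. -/
def hDist {n : ℕ} (X X' : Fin n → Z) : ℕ :=
  (Finset.univ.filter fun i => X i ≠ X' i).card

/-- Two datasets are neighbors if they differ in exactly one coordinate. -/
def Neighbor {n : ℕ} (X X' : Fin n → Z) : Prop := hDist X X' = 1

/-- Gaussian measure on Euclidean space with mean `m` and covariance `v • I`
(the product of one-dimensional Gaussians of variance `v`). -/
def gaussianE {ι : Type*} [Fintype ι] (m : EuclideanSpace ℝ ι) (v : ℝ≥0) :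
    Measure (EuclideanSpace ℝ ι) :=
  (Measure.pi fun i => gaussianReal (m i) v).map (MeasurableEquiv.toLp 2 (ι → ℝ))

/-- The threshold shift `M = 1 + (2/ε) log (max (1/δ) (1/ε))` of the ePTR mechanism. -/
def Mshift (ε δ : ℝ) : ℝ := 1 + 2 / ε * Real.log (max (1 / δ) (1 / ε))

/-- The release probability of the ePTR mechanism at sub-distance value `g`. -/
def relProb (ε δ g : ℝ) : ℝ :=
  Real.exp (ε * (g - Mshift ε δ) / 2) / (Real.exp (ε * (g - Mshift ε δ) / 2) + 1)

/-- The standard deviation `s = (2α/ε)√(2 log(1.25/δ))` of the ePTR Gaussian noise. -/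
def noiseSD (ε δ α : ℝ) : ℝ := 2 * α / ε * Real.sqrt (2 * Real.log (1.25 / δ))

/-- Output distribution of the ePTR mechanism on input dataset `X`
(Euclidean-space valued version). -/
def ePTR {n : ℕ} {ι : Type*} [Fintype ι] (ε δ α : ℝ)
    (θhat : (Fin n → Z) → EuclideanSpace ℝ ι) (γ : (Fin n → Z) → ℝ)
    (πbot : Measure (EuclideanSpace ℝ ι)) (X : Fin n → Z) :
    Measure (EuclideanSpace ℝ ι) :=
  ENNReal.ofReal (relProb ε δ (γ X)) • gaussianE (θhat X) (Real.toNNReal (noiseSD ε δ α ^ 2))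
    + ENNReal.ofReal (1 - relProb ε δ (γ X)) • πbot

/-- Output distribution of the ePTR mechanism on input dataset `X` (real valued version). -/
def ePTR1 {n : ℕ} (ε δ α : ℝ)
    (θhat : (Fin n → Z) → ℝ) (γ : (Fin n → Z) → ℝ)
    (πbot : Measure ℝ) (X : Fin n → Z) : Measure ℝ :=
  ENNReal.ofReal (relProb ε δ (γ X)) • gaussianReal (θhat X) (Real.toNNReal (noiseSD ε δ α ^ 2))
    + ENNReal.ofReal (1 - relProb ε δ (γ X)) • πbot

/-- `(ε, δ)`-differential privacy of a mechanism: for all neighboring datasets `X, X'`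
and all measurable events `B`, `μ_X(B) ≤ e^ε μ_{X'}(B) + δ`. -/
def IsDP {n : ℕ} {Ω : Type*} [MeasurableSpace Ω]
    (mech : (Fin n → Z) → Measure Ω) (ε δ : ℝ) : Prop :=
  ∀ X X' : Fin n → Z, Neighbor X X' → ∀ B : Set Ω, MeasurableSet B →
    mech X B ≤ ENNReal.ofReal (Real.exp ε) * mech X' B + ENNReal.ofReal δ

/-- Projection onto the closed ball of radius `a` in a normed space:
`proj a v = (a / max ‖v‖ a) • v`. -/
def proj {V : Type*} [NormedAddCommGroup V] [Module ℝ V] (a : ℝ) (v : V) : V :=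
  (a / max ‖v‖ a) • v

/-- Identification of `Fin p → ℝ` with Euclidean space. -/
def toE {p : ℕ} : (Fin p → ℝ) → EuclideanSpace ℝ (Fin p) :=
  ⇑(EuclideanSpace.equiv (Fin p) ℝ).symm

/-- ℓ²-operator norm of a square matrix. -/
def opNorm {p : ℕ} (A : Matrix (Fin p) (Fin p) ℝ) : ℝ :=
  ‖Matrix.toEuclideanCLM (𝕜 := ℝ) A‖

/-- Smallest eigenvalue of a (symmetric) matrix, via the Rayleigh quotient. -/
def lambdaMin {p : ℕ} (A : Matrix (Fin p) (Fin p) ℝ) : ℝ :=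
  ⨅ v : Metric.sphere (0 : EuclideanSpace ℝ (Fin p)) 1,
    ⟪Matrix.toEuclideanCLM (𝕜 := ℝ) A v.1, v.1⟫

/-- Index set of data points carrying label `k`. -/
def Ik {n K : ℕ} {E : Type*} (X : Fin n → E × Fin K) (k : Fin K) : Finset (Fin n) :=
  Finset.univ.filter fun j => (X j).2 = k

/-- Class-`k` sample frequency `μ̂_k = |I_k| / n`. -/
def classFreq {n K : ℕ} {E : Type*} (X : Fin n → E × Fin K) (k : Fin K) : ℝ :=
  (Ik X k).card / n

/-- Class-`k` sample mean (equal to `0` if the class is empty). -/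
def classMean {n K p : ℕ} (X : Fin n → EuclideanSpace ℝ (Fin p) × Fin K) (k : Fin K) :
    EuclideanSpace ℝ (Fin p) :=
  ((Ik X k).card : ℝ)⁻¹ • ∑ j ∈ Ik X k, (X j).1

/-- The sub-distance of the ePTR Bayes classifier:
`γ(X) = max(min_k |I_k(X)| - c₀ n - 1, 0)`. -/
def gammaBC {n K : ℕ} {E : Type*} (c0 : ℝ) (X : Fin n → E × Fin K) : ℝ :=
  max (((⨅ k : Fin K, (Ik X k).card : ℕ) : ℝ) - c0 * n - 1) 0

end EPTR

namespace EPTRAux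
open EPTR MeasureTheory ProbabilityTheory Real
open scoped NNReal ENNReal

set_option maxHeartbeats 1000000

lemma lintegral_pi_prod : ∀ {p : ℕ} (μ : Fin p → Measure ℝ),
    (∀ i, SigmaFinite (μ i)) → ∀ f : Fin p → ℝ → ℝ≥0∞, (∀ i, Measurable (f i)) →
    ∫⁻ x, ∏ i, f i (x i) ∂Measure.pi μ = ∏ i, ∫⁻ y, f i y ∂μ i := by
  intro p
  induction p with
  | zero =>
    intro μ _ f _
    simp [Measure.pi_univ]
  | succ n ih =>
    intro μ hμ f hf
    haveI : ∀ i, SigmaFinite (μ i) := hμ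
    have hpres := measurePreserving_piFinSuccAbove μ 0
    have hGmeas : Measurable (fun y : ℝ × (Fin n → ℝ) =>
        f 0 y.1 * ∏ j, f (Fin.succ j) (y.2 j)) := by
      refine ((hf 0).comp measurable_fst).mul ?_
      exact Finset.measurable_prod _ fun j _ =>
        (hf _).comp ((measurable_pi_apply j).comp measurable_snd)
    have key : ∫⁻ x, ∏ i, f i (x i) ∂Measure.pi μ
        = ∫⁻ y, f 0 y.1 * ∏ j, f (Fin.succ j) (y.2 j)
            ∂((μ 0).prod (Measure.pi fun j => μ ((0 : Fin (n+1)).succAbove j))) := by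
      rw [← hpres.lintegral_comp hGmeas]
      congr 1
      ext x
      simp [MeasurableEquiv.piFinSuccAbove, Fin.prod_univ_succ, Fin.succAbove, Fin.tail]
    have hfac : ∫⁻ (y : ℝ × (Fin n → ℝ)), f 0 y.1 * ∏ j, f (Fin.succ j) (y.2 j)
          ∂((μ 0).prod (Measure.pi fun j => μ ((0 : Fin (n+1)).succAbove j)))
        = (∫⁻ y, f 0 y ∂μ 0) * ∫⁻ t, ∏ j, f (Fin.succ j) (t j)
            ∂(Measure.pi fun j => μ ((0 : Fin (n+1)).succAbove j)) :=
      lintegral_prod_mul ((hf 0).aemeasurable)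
        ((Finset.measurable_prod _ fun j _ => (hf _).comp (measurable_pi_apply j)).aemeasurable)
    rw [key, hfac, ih _ (fun j => hμ _) _ (fun j => hf _), Fin.prod_univ_succ]
    simp [Fin.succAbove_zero]


/-- Density representation of the finite product of 1-d Gaussians. -/
lemma pi_gaussian_eq {p : ℕ} (m : Fin p → ℝ) {v : ℝ≥0} (hv : v ≠ 0) :
    Measure.pi (fun i => gaussianReal (m i) v)
      = (Measure.pi fun _ : Fin p => (volume : Measure ℝ)).withDensity
          (fun x => ∏ i, gaussianPDF (m i) v (x i)) := by
  refine Measure.pi_eq fun s hs => ?_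
  rw [withDensity_apply _ (MeasurableSet.univ_pi hs),
    ← lintegral_indicator (MeasurableSet.univ_pi hs) (fun x => ∏ i, gaussianPDF (m i) v (x i))]
  have hind : ∀ x : Fin p → ℝ, (Set.univ.pi s).indicator
      (fun x => ∏ i, gaussianPDF (m i) v (x i)) x
      = ∏ i, (s i).indicator (gaussianPDF (m i) v) (x i) := by
    intro x
    by_cases hx : x ∈ Set.univ.pi s
    · rw [Set.indicator_of_mem hx]
      exact Finset.prod_congr rfl fun i _ =>
        (Set.indicator_of_mem (hx i (Set.mem_univ i)) _).symm
    · rw [Set.indicator_of_notMem hx]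
      obtain ⟨i, hi⟩ : ∃ i, x i ∉ s i := by
        by_contra h
        push_neg at h
        exact hx fun i _ => h i
      exact (Finset.prod_eq_zero (Finset.mem_univ i)
        (Set.indicator_of_notMem hi _)).symm
  simp_rw [hind]
  rw [lintegral_pi_prod _ (fun _ => inferInstance) _
    (fun i => (measurable_gaussianPDF _ _).indicator (hs i))]
  exact (Finset.prod_congr rfl fun i _ => by
    rw [lintegral_indicator (hs i) _, ← gaussianReal_apply _ hv]).symm


/-- Translation of a pi Gaussian. -/
lemma pi_gaussian_map_add {p : ℕ} (m w : Fin p → ℝ) (v : ℝ≥0) :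
    (Measure.pi fun i => gaussianReal (m i) v).map (· + w)
      = Measure.pi (fun i => gaussianReal (m i + w i) v) := by
  have h := measurePreserving_pi (fun i => gaussianReal (m i) v)
    (fun i => gaussianReal (m i + w i) v)
    (f := fun i (x : ℝ) => x + w i)
    (fun i => ⟨measurable_add_const _, gaussianReal_map_add_const _⟩)
  have := h.map_eq
  convert this using 2
  funext x i; rfl

/-- Reflection `x ↦ 2m - x` preserves the pi Gaussian centered at `m`. -/
lemma pi_gaussian_map_reflect {p : ℕ} (m : Fin p → ℝ) (v : ℝ≥0) :
    (Measure.pi fun i => gaussianReal (m i) v).map (fun x i => 2 * m i - x i)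
      = Measure.pi (fun i => gaussianReal (m i) v) := by
  have hcoord : ∀ i : Fin p, MeasurePreserving (fun x : ℝ => 2 * m i - x)
      (gaussianReal (m i) v) (gaussianReal (m i) v) := by
    intro i
    refine ⟨(measurable_const.sub measurable_id), ?_⟩
    have h1 : (gaussianReal (m i) v).map ((-1 : ℝ) * ·)
        = gaussianReal (-(m i)) v := by
      rw [gaussianReal_map_const_mul]
      congr 1
      · ring
      · ext : 1; simp
    have h2 : (gaussianReal (-(m i)) v).map (· + 2 * m i) = gaussianReal (m i) v := by
      rw [gaussianReal_map_add_const]; congr 1; ring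
    calc (gaussianReal (m i) v).map (fun x : ℝ => 2 * m i - x)
        = ((gaussianReal (m i) v).map ((-1 : ℝ) * ·)).map (· + 2 * m i) := by
          rw [Measure.map_map (measurable_add_const _) (measurable_const_mul _)]
          congr 1; ext x; simp; ring
      _ = gaussianReal (m i) v := by rw [h1, h2]
  exact (measurePreserving_pi _ _ hcoord).map_eq

/-- Pointwise comparison of products of Gaussian densities. -/
lemma prod_pdf_le {p : ℕ} (a b x : Fin p → ℝ) {v : ℝ≥0} (hv : v ≠ 0) {K : ℝ}
    (h : ∑ i, ((x i - b i) ^ 2 - (x i - a i) ^ 2) ≤ 2 * (v : ℝ) * K) :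
    ∏ i, gaussianPDF (a i) v (x i)
      ≤ ENNReal.ofReal (Real.exp K) * ∏ i, gaussianPDF (b i) v (x i) := by
  have hvpos : (0 : ℝ) < v := lt_of_le_of_ne v.coe_nonneg (by exact_mod_cast hv.symm)
  set C : ℝ := (Real.sqrt (2 * π * v))⁻¹ ^ p with hC
  have hCpos : 0 < C := by positivity
  have key : ∏ i, gaussianPDFReal (a i) v (x i)
      ≤ Real.exp K * ∏ i, gaussianPDFReal (b i) v (x i) := by
    have expand : ∀ c : Fin p → ℝ, ∏ i, gaussianPDFReal (c i) v (x i)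
        = C * Real.exp (∑ i, (-(x i - c i) ^ 2 / (2 * (v : ℝ)))) := by
      intro c
      simp only [gaussianPDFReal]
      rw [Finset.prod_mul_distrib, Finset.prod_const, Finset.card_univ, Fintype.card_fin,
        ← Real.exp_sum, hC]
    rw [expand a, expand b]
    have hrw : Real.exp K * (C * Real.exp (∑ i, (-(x i - b i) ^ 2 / (2 * (v : ℝ)))))
        = C * Real.exp ((∑ i, (-(x i - b i) ^ 2 / (2 * (v : ℝ)))) + K) := by
      rw [Real.exp_add]; ring
    rw [hrw]
    refine mul_le_mul_of_nonneg_left (Real.exp_le_exp.mpr ?_) hCpos.le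
    have hsum : ∀ c : Fin p → ℝ, ∑ i, (-(x i - c i) ^ 2 / (2 * (v : ℝ)))
        = -(∑ i, (x i - c i) ^ 2) / (2 * (v : ℝ)) := by
      intro c
      rw [← Finset.sum_div, ← Finset.sum_neg_distrib]
    have hdiff : (∑ i, (x i - b i) ^ 2) - (∑ i, (x i - a i) ^ 2) ≤ 2 * (v : ℝ) * K := by
      rw [← Finset.sum_sub_distrib]; exact h
    rw [hsum a, hsum b]
    rw [div_add' _ _ _ (by positivity : (2 : ℝ) * (v : ℝ) ≠ 0), div_le_div_iff_of_pos_right (by positivity)]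
    nlinarith [hdiff]
  calc ∏ i, gaussianPDF (a i) v (x i)
      = ENNReal.ofReal (∏ i, gaussianPDFReal (a i) v (x i)) := by
        simp only [gaussianPDF]
        rw [← ENNReal.ofReal_prod_of_nonneg (fun i _ => gaussianPDFReal_nonneg _ _ _)]
    _ ≤ ENNReal.ofReal (Real.exp K * ∏ i, gaussianPDFReal (b i) v (x i)) :=
        ENNReal.ofReal_le_ofReal key
    _ = ENNReal.ofReal (Real.exp K) * ∏ i, gaussianPDF (b i) v (x i) := by
        simp only [gaussianPDF]
        rw [ENNReal.ofReal_mul (Real.exp_nonneg _),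
          ← ENNReal.ofReal_prod_of_nonneg (fun i _ => gaussianPDFReal_nonneg _ _ _)]


/-- Numeric core: the Gaussian-mechanism tail bound constant works. -/
lemma numeric_core {ε δ α r2 : ℝ} (hε0 : 0 < ε) (hε1 : ε < 1) (hδ0 : 0 < δ) (hδ1 : δ < 1)
    (hα : 0 < α) (hr2 : 0 < r2) (hr2α : r2 ≤ α ^ 2) :
    let L := Real.log (1.25 / δ)
    let s2 := (2 * α / ε * Real.sqrt (2 * L)) ^ 2
    let c := ε / 2 * s2 - r2 / 2
    0 ≤ c ∧ Real.exp (-(c ^ 2) / (2 * s2 * r2)) ≤ 2 * δ := by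
  intro L s2 c
  have hL8 : (1/8 : ℝ) < L := by
    have h1 : Real.exp (1/8 : ℝ) < 1.25 := by
      have h := Real.exp_one_lt_d9
      have hpow : Real.exp (1/8 : ℝ) ^ 8 = Real.exp 1 := by
        rw [← Real.exp_nat_mul]; norm_num
      nlinarith [Real.exp_pos (1/8 : ℝ), sq_nonneg (Real.exp (1/8:ℝ)),
        pow_pos (Real.exp_pos (1/8:ℝ)) 2, pow_pos (Real.exp_pos (1/8:ℝ)) 4,
        sq_nonneg (Real.exp (1/8:ℝ)^2 - 1.028), sq_nonneg (Real.exp (1/8:ℝ)^4 - 1.057)]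
    have h2 : (1.25 : ℝ) < 1.25 / δ := by
      rw [lt_div_iff₀ hδ0]; nlinarith
    calc (1/8 : ℝ) < Real.log 1.25 := by
          rw [← Real.log_exp (1/8 : ℝ)]
          exact Real.log_lt_log (Real.exp_pos _) h1
      _ < L := Real.log_lt_log (by norm_num) h2
  have hLpos : 0 < L := by linarith
  have hs2 : s2 = 8 * α ^ 2 * L / ε ^ 2 := by
    show (2 * α / ε * Real.sqrt (2 * L)) ^ 2 = _
    rw [mul_pow, Real.sq_sqrt (by linarith)]
    field_simp; ring
  have hc : 0 ≤ c := by
    show 0 ≤ ε / 2 * s2 - r2 / 2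
    rw [hs2]
    have : ε / 2 * (8 * α ^ 2 * L / ε ^ 2) = 4 * α ^ 2 * L / ε := by
      field_simp; ring
    rw [this]
    have h4 : r2 / 2 ≤ 4 * α ^ 2 * L / ε := by
      rw [le_div_iff₀ hε0]
      nlinarith [mul_le_mul_of_nonneg_right hr2α hε0.le,
        mul_lt_mul_of_pos_left hL8 (mul_pos hα hα), mul_pos hα hα,
        mul_le_mul_of_nonneg_left hε1.le (mul_pos hα hα).le]
    linarith
  refine ⟨hc, ?_⟩
  have hs2pos : 0 < s2 := by rw [hs2]; positivity
  -- key algebraic inequality: c^2 ≥ (2L - 1/2) * s2 * r2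
  have hcval : c = 4 * α ^ 2 * L / ε - r2 / 2 := by
    show ε / 2 * s2 - r2 / 2 = _
    rw [hs2]; field_simp; ring
  have hcε : c * ε = 4 * α ^ 2 * L - ε * r2 / 2 := by
    rw [hcval]; field_simp
  have hs2ε : s2 * ε ^ 2 = 8 * α ^ 2 * L := by
    rw [hs2]; field_simp
  have hkey2 : (2 * L - 1/2) * (s2 * ε ^ 2) * r2 ≤ (c * ε) ^ 2 := by
    rw [hcε, hs2ε]
    nlinarith [mul_nonneg (mul_nonneg (mul_nonneg hLpos.le hLpos.le)
        (sub_nonneg.mpr hr2α)) (mul_pos hα hα).le,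
      mul_nonneg (mul_nonneg (mul_nonneg (mul_pos hα hα).le hLpos.le) hr2.le)
        (sub_nonneg.mpr hε1.le),
      sq_nonneg (ε * r2)]
  have hkey : (2 * L - 1/2) * s2 * r2 ≤ c ^ 2 := by
    rw [mul_pow] at hkey2
    calc (2 * L - 1/2) * s2 * r2 = ((2 * L - 1/2) * (s2 * ε ^ 2) * r2) / ε ^ 2 := by
          field_simp
      _ ≤ (c ^ 2 * ε ^ 2) / ε ^ 2 := by
          gcongr
      _ = c ^ 2 := by field_simp
  -- hence exponent ≤ 1/4 - L
  have hexp_le : -(c ^ 2) / (2 * s2 * r2) ≤ 1/4 - L := by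
    rw [div_le_iff₀ (by positivity)]
    nlinarith [hkey]
  calc Real.exp (-(c ^ 2) / (2 * s2 * r2)) ≤ Real.exp (1/4 - L) := Real.exp_le_exp.mpr hexp_le
    _ = Real.exp (1/4) * (δ / 1.25) := by
        rw [Real.exp_sub]
        rw [Real.exp_log (by positivity : (0:ℝ) < 1.25 / δ)]
        field_simp
    _ ≤ 2.5 * (δ / 1.25) := by
        refine mul_le_mul_of_nonneg_right ?_ (by positivity)
        have hpow : Real.exp (1/4 : ℝ) ^ 4 = Real.exp 1 := by
          rw [← Real.exp_nat_mul]; norm_num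
        have h := Real.exp_one_lt_d9
        nlinarith [Real.exp_pos (1/4 : ℝ), pow_pos (Real.exp_pos (1/4:ℝ)) 2,
          sq_nonneg (Real.exp (1/4:ℝ) - 1.3), sq_nonneg (Real.exp (1/4:ℝ)^2 - 1.7)]
    _ = 2 * δ := by ring


/-- Comparison of two pi Gaussians on a set where the density ratio is controlled. -/
lemma pi_gaussian_measure_le {p : ℕ} (a b : Fin p → ℝ) {v : ℝ≥0} (hv : v ≠ 0) {K : ℝ}
    {A : Set (Fin p → ℝ)} (hA : MeasurableSet A)
    (h : ∀ x ∈ A, ∑ i, ((x i - b i) ^ 2 - (x i - a i) ^ 2) ≤ 2 * (v : ℝ) * K) :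
    Measure.pi (fun i => gaussianReal (a i) v) A
      ≤ ENNReal.ofReal (Real.exp K) * Measure.pi (fun i => gaussianReal (b i) v) A := by
  have hmeasb : Measurable fun x : Fin p → ℝ => ∏ i, gaussianPDF (b i) v (x i) :=
    Finset.measurable_prod _ fun i _ =>
      (measurable_gaussianPDF _ _).comp (measurable_pi_apply i)
  rw [pi_gaussian_eq a hv, pi_gaussian_eq b hv, withDensity_apply _ hA, withDensity_apply _ hA]
  calc ∫⁻ x in A, ∏ i, gaussianPDF (a i) v (x i) ∂(Measure.pi fun _ => (volume : Measure ℝ))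
      ≤ ∫⁻ x in A, ENNReal.ofReal (Real.exp K) * ∏ i, gaussianPDF (b i) v (x i)
          ∂(Measure.pi fun _ => (volume : Measure ℝ)) :=
        setLIntegral_mono (hmeasb.const_mul _) (fun x hx => prod_pdf_le a b x hv (h x hx))
    _ = ENNReal.ofReal (Real.exp K) * ∫⁻ x in A, ∏ i, gaussianPDF (b i) v (x i)
          ∂(Measure.pi fun _ => (volume : Measure ℝ)) := lintegral_const_mul _ hmeasb

/-- The Gaussian mechanism on `Fin p → ℝ` with the ePTR noise scale is
`(ε/2, δ)`-indistinguishable for means at (Euclidean) distance at most `α`. -/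
lemma gaussian_mech {p : ℕ} {ε δ α : ℝ} (hε : ε ∈ Set.Ioo (0:ℝ) 1) (hδ : δ ∈ Set.Ioo (0:ℝ) 1)
    (hα : 0 < α) (a b : Fin p → ℝ) (hab : ∑ i, (a i - b i) ^ 2 ≤ α ^ 2)
    {B : Set (Fin p → ℝ)} (hB : MeasurableSet B) :
    Measure.pi (fun i => gaussianReal (a i)
        (Real.toNNReal ((2 * α / ε * Real.sqrt (2 * Real.log (1.25 / δ))) ^ 2))) B
      ≤ ENNReal.ofReal (Real.exp (ε / 2)) * Measure.pi (fun i => gaussianReal (b i)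
          (Real.toNNReal ((2 * α / ε * Real.sqrt (2 * Real.log (1.25 / δ))) ^ 2))) B
        + ENNReal.ofReal δ := by
  obtain ⟨hε0, hε1⟩ := hε
  obtain ⟨hδ0, hδ1⟩ := hδ
  set L := Real.log (1.25 / δ) with hLdef
  have hL : 0 < L := Real.log_pos (by rw [lt_div_iff₀ hδ0]; nlinarith)
  set s2 : ℝ := (2 * α / ε * Real.sqrt (2 * L)) ^ 2 with hs2def
  have hs2pos : 0 < s2 := by
    have : 0 < 2 * α / ε * Real.sqrt (2 * L) := by positivity
    positivity
  set v : ℝ≥0 := Real.toNNReal s2 with hvdef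
  have hvv : (v : ℝ) = s2 := Real.coe_toNNReal _ hs2pos.le
  have hv : v ≠ 0 := by
    simp only [hvdef, ne_eq, Real.toNNReal_eq_zero, not_le]
    exact hs2pos
  set u : Fin p → ℝ := fun i => a i - b i with hudef
  set r2 : ℝ := ∑ i, u i ^ 2 with hr2def
  have hr2α : r2 ≤ α ^ 2 := hab
  by_cases hr2 : r2 = 0
  · -- a = b
    have hab' : a = b := by
      funext i
      have : u i = 0 := by
        have := Finset.sum_eq_zero_iff_of_nonneg (fun i _ => sq_nonneg (u i)) |>.mp hr2
        exact (pow_eq_zero_iff two_ne_zero).mp (this i (Finset.mem_univ i))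
      simpa [hudef, sub_eq_zero] using this
    rw [hab']
    calc Measure.pi (fun i => gaussianReal (b i) v) B
        ≤ ENNReal.ofReal (Real.exp (ε / 2)) * Measure.pi (fun i => gaussianReal (b i) v) B := by
          nth_rewrite 1 [← one_mul (Measure.pi (fun i => gaussianReal (b i) v) B)]
          exact mul_le_mul_left (by
            simp only [← ENNReal.ofReal_one]
            exact ENNReal.ofReal_le_ofReal (Real.one_le_exp (by positivity))) _
      _ ≤ _ := le_self_add
  · have hr2pos : 0 < r2 :=
      lt_of_le_of_ne (Finset.sum_nonneg fun i _ => sq_nonneg _) (Ne.symm hr2)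
    set c : ℝ := ε / 2 * s2 - r2 / 2 with hcdef
    obtain ⟨hc0, htail⟩ := numeric_core hε0 hε1 hδ0 hδ1 hα hr2pos hr2α
    -- the good set
    set S : Set (Fin p → ℝ) := {x | ∑ i, u i * (x i - a i) ≤ c} with hSdef
    have hSmeas : MeasurableSet S := by
      have : Measurable fun x : Fin p → ℝ => ∑ i, u i * (x i - a i) :=
        Finset.measurable_sum _ fun i _ =>
          (measurable_const.mul ((measurable_pi_apply i).sub measurable_const))
      exact measurableSet_le this measurable_const
    have hsplit : Measure.pi (fun i => gaussianReal (a i) v) B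
        ≤ Measure.pi (fun i => gaussianReal (a i) v) (B ∩ S)
          + Measure.pi (fun i => gaussianReal (a i) v) Sᶜ := by
      calc Measure.pi (fun i => gaussianReal (a i) v) B
          ≤ Measure.pi (fun i => gaussianReal (a i) v) ((B ∩ S) ∪ Sᶜ) :=
            measure_mono (fun x hx => by
              by_cases hxS : x ∈ S
              · exact Or.inl ⟨hx, hxS⟩
              · exact Or.inr hxS)
        _ ≤ _ := measure_union_le _ _
    -- Claim A
    have hA : Measure.pi (fun i => gaussianReal (a i) v) (B ∩ S)
        ≤ ENNReal.ofReal (Real.exp (ε / 2)) * Measure.pi (fun i => gaussianReal (b i) v) B := by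
      calc Measure.pi (fun i => gaussianReal (a i) v) (B ∩ S)
          ≤ ENNReal.ofReal (Real.exp (ε / 2))
              * Measure.pi (fun i => gaussianReal (b i) v) (B ∩ S) := by
            refine pi_gaussian_measure_le a b hv (hB.inter hSmeas) fun x hx => ?_
            have hxS : ∑ i, u i * (x i - a i) ≤ c := hx.2
            have hexpand : ∑ i, ((x i - b i) ^ 2 - (x i - a i) ^ 2)
                = 2 * ∑ i, u i * (x i - a i) + r2 := by
              rw [Finset.mul_sum, hr2def, ← Finset.sum_add_distrib]
              exact Finset.sum_congr rfl fun i _ => by simp only [hudef]; ring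
            rw [hexpand, hvv]
            simp only [hcdef] at hxS
            linarith
        _ ≤ _ := mul_le_mul_right (measure_mono Set.inter_subset_left) _
    -- Claim B
    have hBclaim : Measure.pi (fun i => gaussianReal (a i) v) Sᶜ ≤ ENNReal.ofReal δ := by
      set w : Fin p → ℝ := fun i => (c / r2) * u i with hwdef
      set K : ℝ := -(c ^ 2) / (2 * s2 * r2) with hKdef
      have hsum_uw : ∑ i, u i * w i = c := by
        calc ∑ i, u i * w i = ∑ i, (c / r2) * u i ^ 2 :=
              Finset.sum_congr rfl fun i _ => by simp only [hwdef]; ring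
          _ = (c / r2) * r2 := by rw [← Finset.mul_sum, ← hr2def]
          _ = c := by field_simp
      -- Step 1 : density ratio between the Gaussians centered at a and a + w
      have hstep1 : Measure.pi (fun i => gaussianReal (a i) v) Sᶜ
          ≤ ENNReal.ofReal (Real.exp K)
            * Measure.pi (fun i => gaussianReal (a i + w i) v) Sᶜ := by
        refine pi_gaussian_measure_le a (fun i => a i + w i) hv hSmeas.compl fun x hx => ?_
        have hxS : c < ∑ i, u i * (x i - a i) := by
          have := hx
          simp only [hSdef, Set.mem_compl_iff, Set.mem_setOf_eq, not_le] at this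
          exact this
        have hexpand : ∑ i, ((x i - (a i + w i)) ^ 2 - (x i - a i) ^ 2)
            = (c ^ 2 / r2) - 2 * (c / r2) * ∑ i, u i * (x i - a i) := by
          have hw2 : ∑ i, w i ^ 2 = c ^ 2 / r2 := by
            calc ∑ i, w i ^ 2 = ∑ i, (c / r2) ^ 2 * u i ^ 2 :=
                  Finset.sum_congr rfl fun i _ => by simp only [hwdef]; ring
              _ = (c / r2) ^ 2 * r2 := by rw [← Finset.mul_sum, ← hr2def]
              _ = c ^ 2 / r2 := by field_simp
          calc ∑ i, ((x i - (a i + w i)) ^ 2 - (x i - a i) ^ 2)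
              = ∑ i, (w i ^ 2 - 2 * ((c / r2) * u i) * (x i - a i)) := by
                refine Finset.sum_congr rfl fun i _ => ?_
                simp only [hwdef]
                ring
            _ = (∑ i, w i ^ 2) - 2 * (c / r2) * ∑ i, u i * (x i - a i) := by
                rw [Finset.sum_sub_distrib, Finset.mul_sum]
                congr 1
                exact Finset.sum_congr rfl fun i _ => by ring
            _ = _ := by rw [hw2]
        rw [hexpand, hvv]
        have hdr : 0 ≤ c / r2 := div_nonneg hc0 hr2pos.le
        have h2K : 2 * s2 * K = -(c ^ 2) / r2 := by
          rw [hKdef]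
          field_simp
        have hmul : 2 * (c / r2) * c ≤ 2 * (c / r2) * ∑ i, u i * (x i - a i) := by
          exact mul_le_mul_of_nonneg_left hxS.le (by positivity)
        have hcc : 2 * (c / r2) * c = 2 * c ^ 2 / r2 := by field_simp
        rw [h2K]
        rw [hcc] at hmul
        have : c ^ 2 / r2 - 2 * c ^ 2 / r2 = -(c ^ 2) / r2 := by ring
        linarith [hmul]
      -- Step 2 : translation sends Sᶜ to the halfspace H
      set H : Set (Fin p → ℝ) := {x | 0 < ∑ i, u i * (x i - a i)} with hHdef
      have hHmeas : MeasurableSet H := by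
        have : Measurable fun x : Fin p → ℝ => ∑ i, u i * (x i - a i) :=
          Finset.measurable_sum _ fun i _ =>
            (measurable_const.mul ((measurable_pi_apply i).sub measurable_const))
        exact measurableSet_lt measurable_const this
      have hstep2 : Measure.pi (fun i => gaussianReal (a i + w i) v) Sᶜ
          = Measure.pi (fun i => gaussianReal (a i) v) H := by
        rw [← pi_gaussian_map_add a w v,
          Measure.map_apply (measurable_add_const w) hSmeas.compl]
        congr 1
        ext x
        simp only [Set.mem_preimage, Set.mem_compl_iff, hSdef, Set.mem_setOf_eq, not_le,
          hHdef, Pi.add_apply]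
        constructor
        · intro hlt
          have : ∑ i, u i * (x i + w i - a i) = (∑ i, u i * (x i - a i)) + c := by
            rw [← hsum_uw, ← Finset.sum_add_distrib]
            exact Finset.sum_congr rfl fun i _ => by ring
          rw [this] at hlt
          linarith
        · intro hlt
          have : ∑ i, u i * (x i + w i - a i) = (∑ i, u i * (x i - a i)) + c := by
            rw [← hsum_uw, ← Finset.sum_add_distrib]
            exact Finset.sum_congr rfl fun i _ => by ring
          rw [this]
          linarith
      -- Step 3 : by symmetry the halfspace has mass at most 1/2
      have hstep3 : Measure.pi (fun i => gaussianReal (a i) v) H ≤ 1/2 := by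
        set Hneg : Set (Fin p → ℝ) := {x | ∑ i, u i * (x i - a i) < 0} with hHnegdef
        have hHnegmeas : MeasurableSet Hneg := by
          have : Measurable fun x : Fin p → ℝ => ∑ i, u i * (x i - a i) :=
            Finset.measurable_sum _ fun i _ =>
              (measurable_const.mul ((measurable_pi_apply i).sub measurable_const))
          exact measurableSet_lt this measurable_const
        have hrefl : Measure.pi (fun i => gaussianReal (a i) v) H
            = Measure.pi (fun i => gaussianReal (a i) v) Hneg := by
          conv_lhs => rw [← pi_gaussian_map_reflect a v]
          rw [Measure.map_apply (f := fun (x : Fin p → ℝ) i => 2 * a i - x i)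
            (measurable_pi_lambda _ fun i => measurable_const.sub (measurable_pi_apply i)) hHmeas]
          congr 1
          ext x
          simp only [Set.mem_preimage, hHdef, Set.mem_setOf_eq, hHnegdef]
          constructor
          · intro hlt
            have : ∑ i, u i * (2 * a i - x i - a i) = -∑ i, u i * (x i - a i) := by
              rw [← Finset.sum_neg_distrib]
              exact Finset.sum_congr rfl fun i _ => by ring
            rw [this] at hlt
            linarith
          · intro hlt
            have : ∑ i, u i * (2 * a i - x i - a i) = -∑ i, u i * (x i - a i) := by
              rw [← Finset.sum_neg_distrib]
              exact Finset.sum_congr rfl fun i _ => by ring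
            rw [this]
            linarith
        have hdisj : Disjoint H Hneg := by
          rw [Set.disjoint_left]
          intro x hx hx'
          simp only [hHdef, Set.mem_setOf_eq] at hx
          simp only [hHnegdef, Set.mem_setOf_eq] at hx'
          linarith
        haveI : ∀ i : Fin p, IsProbabilityMeasure (gaussianReal (a i) v) :=
          fun i => inferInstance
        have hsum : Measure.pi (fun i => gaussianReal (a i) v) H
            + Measure.pi (fun i => gaussianReal (a i) v) Hneg ≤ 1 := by
          rw [← measure_union hdisj hHnegmeas]
          exact prob_le_one
        rw [hrefl] at hsum ⊢
        rw [← two_mul] at hsum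
        rw [ENNReal.le_div_iff_mul_le (Or.inl two_ne_zero) (Or.inl ENNReal.ofNat_ne_top),
          mul_comm]
        exact hsum
      -- put the three steps together
      calc Measure.pi (fun i => gaussianReal (a i) v) Sᶜ
          ≤ ENNReal.ofReal (Real.exp K)
              * Measure.pi (fun i => gaussianReal (a i + w i) v) Sᶜ := hstep1
        _ = ENNReal.ofReal (Real.exp K)
              * Measure.pi (fun i => gaussianReal (a i) v) H := by rw [hstep2]
        _ ≤ ENNReal.ofReal (Real.exp K) * (1/2) := mul_le_mul_right hstep3 _
        _ = ENNReal.ofReal (Real.exp K * (1/2)) := by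
            rw [ENNReal.ofReal_mul (Real.exp_nonneg _)]
            congr 1
            rw [ENNReal.ofReal_div_of_pos (by norm_num)]
            norm_num
        _ ≤ ENNReal.ofReal δ := by
            refine ENNReal.ofReal_le_ofReal ?_
            have : Real.exp K ≤ 2 * δ := htail
            linarith
    calc Measure.pi (fun i => gaussianReal (a i) v) B
        ≤ _ + _ := hsplit
      _ ≤ _ := add_le_add hA hBclaim


/- ### Logistic function lemmas -/

lemma relProb_pos (ε δ g : ℝ) : 0 < relProb ε δ g := by
  unfold relProb
  positivity

lemma relProb_lt_one (ε δ g : ℝ) : relProb ε δ g < 1 := by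
  unfold relProb
  rw [div_lt_one (by positivity)]
  linarith [Real.exp_pos (ε * (g - Mshift ε δ) / 2)]

lemma relProb_le_exp_mul {ε δ g g' k : ℝ} (hε : 0 < ε) (hk : 0 ≤ k) (h : g ≤ g' + 2 * k / ε) :
    relProb ε δ g ≤ Real.exp k * relProb ε δ g' := by
  unfold relProb
  set A := Real.exp (ε * (g - Mshift ε δ) / 2) with hA
  set B := Real.exp (ε * (g' - Mshift ε δ) / 2) with hB
  have hApos : 0 < A := Real.exp_pos _
  have hBpos : 0 < B := Real.exp_pos _
  have hAB : A ≤ Real.exp k * B := by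
    rw [hA, hB, ← Real.exp_add]
    refine Real.exp_le_exp.mpr ?_
    have : ε * (g - Mshift ε δ) / 2 ≤ ε * ((g' + 2 * k / ε) - Mshift ε δ) / 2 := by
      have := mul_le_mul_of_nonneg_left (sub_le_sub_right h (Mshift ε δ)) hε.le
      linarith
    calc ε * (g - Mshift ε δ) / 2 ≤ ε * ((g' + 2 * k / ε) - Mshift ε δ) / 2 := this
      _ = k + ε * (g' - Mshift ε δ) / 2 := by field_simp; ring
  have hek : 1 ≤ Real.exp k := Real.one_le_exp hk
  rw [div_le_iff₀ (by positivity)]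
  have hre : Real.exp k * (B / (B + 1)) * (A + 1) = (Real.exp k * B * (A + 1)) / (B + 1) := by
    ring
  rw [hre, le_div_iff₀ (by positivity)]
  nlinarith [mul_le_mul_of_nonneg_right hek (mul_pos hApos hBpos).le]

lemma one_sub_relProb_le_exp_mul {ε δ g g' k : ℝ} (hε : 0 < ε) (hk : 0 ≤ k)
    (h : g' ≤ g + 2 * k / ε) :
    1 - relProb ε δ g ≤ Real.exp k * (1 - relProb ε δ g') := by
  unfold relProb
  set A := Real.exp (ε * (g - Mshift ε δ) / 2) with hA
  set B := Real.exp (ε * (g' - Mshift ε δ) / 2) with hB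
  have hApos : 0 < A := Real.exp_pos _
  have hBpos : 0 < B := Real.exp_pos _
  have hBA : B ≤ Real.exp k * A := by
    rw [hA, hB, ← Real.exp_add]
    refine Real.exp_le_exp.mpr ?_
    have := mul_le_mul_of_nonneg_left (sub_le_sub_right h (Mshift ε δ)) hε.le
    have heq : ε * ((g + 2 * k / ε) - Mshift ε δ) / 2 = k + ε * (g - Mshift ε δ) / 2 := by
      field_simp; ring
    linarith [heq ▸ (by linarith : ε * (g' - Mshift ε δ) / 2
      ≤ ε * ((g + 2 * k / ε) - Mshift ε δ) / 2)]
  have hek : 1 ≤ Real.exp k := Real.one_le_exp hk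
  have h1 : 1 - A / (A + 1) = 1 / (A + 1) := by field_simp; ring
  have h2 : 1 - B / (B + 1) = 1 / (B + 1) := by field_simp; ring
  rw [h1, h2, div_le_iff₀ (by positivity)]
  have hre : Real.exp k * (1 / (B + 1)) * (A + 1) = (Real.exp k * (A + 1)) / (B + 1) := by
    ring
  rw [hre, le_div_iff₀ (by positivity), one_mul]
  nlinarith

lemma relProb_le_delta {ε δ g : ℝ} (hε0 : 0 < ε) (hδ0 : 0 < δ) (hg : g ≤ 1) :
    relProb ε δ g ≤ δ := by
  unfold relProb
  set x := ε * (g - Mshift ε δ) / 2 with hx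
  have hxle : x ≤ Real.log δ := by
    have hM : ε * (g - Mshift ε δ) / 2 = ε * (g - 1) / 2 - Real.log (max (1 / δ) (1 / ε)) := by
      unfold Mshift
      field_simp
      ring
    have hlog : Real.log (1 / δ) ≤ Real.log (max (1 / δ) (1 / ε)) :=
      Real.log_le_log (by positivity) (le_max_left _ _)
    have hlogd : Real.log (1 / δ) = -Real.log δ := by
      rw [one_div, Real.log_inv]
    have hg2 : ε * (g - 1) / 2 ≤ 0 := by nlinarith
    rw [hx, hM]
    rw [hlogd] at hlog
    linarith
  calc Real.exp x / (Real.exp x + 1) ≤ Real.exp x := by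
        rw [div_le_iff₀ (by positivity)]
        nlinarith [Real.exp_pos x, sq_nonneg (Real.exp x)]
    _ ≤ Real.exp (Real.log δ) := Real.exp_le_exp.mpr hxle
    _ = δ := Real.exp_log hδ0



instance gaussianE_isProbability {ι : Type*} [Fintype ι] (m : EuclideanSpace ℝ ι) (v : ℝ≥0) :
    IsProbabilityMeasure (gaussianE m v) := by
  unfold gaussianE
  exact Measure.isProbabilityMeasure_map (MeasurableEquiv.measurable _).aemeasurable

lemma gaussianE_apply {ι : Type*} [Fintype ι] (m : EuclideanSpace ℝ ι) (v : ℝ≥0)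
    {B : Set (EuclideanSpace ℝ ι)} (hB : MeasurableSet B) :
    gaussianE m v B
      = Measure.pi (fun i => gaussianReal (m i) v)
          (MeasurableEquiv.toLp 2 (ι → ℝ) ⁻¹' B) := by
  unfold gaussianE
  exact Measure.map_apply (MeasurableEquiv.measurable _) hB

/-- The Gaussian mechanism, on Euclidean space. -/
lemma gaussianE_mech {p : ℕ} {ε δ α : ℝ} (hε : ε ∈ Set.Ioo (0:ℝ) 1) (hδ : δ ∈ Set.Ioo (0:ℝ) 1)
    (hα : 0 < α) (a b : EuclideanSpace ℝ (Fin p)) (hab : ‖a - b‖ ≤ α)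
    {B : Set (EuclideanSpace ℝ (Fin p))} (hB : MeasurableSet B) :
    gaussianE a (Real.toNNReal (noiseSD ε δ α ^ 2)) B
      ≤ ENNReal.ofReal (Real.exp (ε / 2)) * gaussianE b (Real.toNNReal (noiseSD ε δ α ^ 2)) B
        + ENNReal.ofReal δ := by
  have hsum : ∑ i, ((fun i => a i) i - (fun i => b i) i) ^ 2 ≤ α ^ 2 := by
    have hnorm : ‖a - b‖ ^ 2 = ∑ i, ((a - b) i) ^ 2 := by
      rw [EuclideanSpace.norm_eq]
      rw [Real.sq_sqrt (Finset.sum_nonneg fun i _ => sq_nonneg _)]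
      exact Finset.sum_congr rfl fun i _ => by rw [Real.norm_eq_abs, sq_abs]
    have hsub : ∀ i, (a - b) i = a i - b i := fun i => rfl
    have : ∑ i, (a i - b i) ^ 2 ≤ α ^ 2 := by
      rw [← Finset.sum_congr rfl fun i _ => congrArg (· ^ 2) (hsub i), ← hnorm]
      exact pow_le_pow_left₀ (norm_nonneg _) hab 2
    exact this
  rw [gaussianE_apply _ _ hB, gaussianE_apply _ _ hB]
  exact gaussian_mech hε hδ hα (fun i => a i) (fun i => b i) hsum
    (MeasurableEquiv.measurable _ hB)


end EPTRAux

set_option maxHeartbeats 1000000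

/-- Theorem 2.1 (ePTR is DP): if `G` is a set of datasets on which the estimator `θhat` has
local sensitivity at most `α`, and `γ` is a sub-distance to `Gᶜ` (1-Lipschitz with respect to
the Hamming distance and positive only on `G`), then the ePTR mechanism built from
`(ε, δ, α, θhat, γ, πbot)` is `(ε, δ)`-differentially private. -/
theorem ePTR_isDP {Z : Type*} [MeasurableSpace Z] {n p : ℕ} (hn : 1 ≤ n) (hp : 1 ≤ p)
    {ε δ α : ℝ} (hε : ε ∈ Set.Ioo (0 : ℝ) 1) (hδ : δ ∈ Set.Ioo (0 : ℝ) 1) (hα : 0 < α)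
    (θhat : (Fin n → Z) → EuclideanSpace ℝ (Fin p)) (hθmeas : Measurable θhat)
    (G : Set (Fin n → Z))
    (hG : ∀ X ∈ G, ∀ X' : Fin n → Z, EPTR.Neighbor X X' → ‖θhat X - θhat X'‖ ≤ α)
    (γ : (Fin n → Z) → ℝ) (hγnonneg : ∀ X, 0 ≤ γ X)
    (hγLip : ∀ X X' : Fin n → Z, |γ X - γ X'| ≤ (EPTR.hDist X X' : ℝ))
    (hγG : ∀ X, 0 < γ X → X ∈ G)
    (πbot : Measure (EuclideanSpace ℝ (Fin p))) [IsProbabilityMeasure πbot] :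
    EPTR.IsDP (EPTR.ePTR ε δ α θhat γ πbot) ε δ := by
  intro X X' hnb B hB
  obtain ⟨hε0, hε1⟩ := hε
  obtain ⟨hδ0, hδ1⟩ := hδ
  set v : ℝ≥0 := Real.toNNReal (EPTR.noiseSD ε δ α ^ 2) with hvdef
  set pX : ℝ := EPTR.relProb ε δ (γ X) with hpXdef
  set pX' : ℝ := EPTR.relProb ε δ (γ X') with hpX'def
  have hlip : |γ X - γ X'| ≤ 1 := by
    have := hγLip X X'
    rw [hnb] at this
    simpa using this
  rw [abs_le] at hlip
  have harg : γ X ≤ γ X' + 2 * (ε / 2) / ε := by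
    rw [mul_div_assoc]
    have : 2 * (ε / 2) / ε = 1 := by field_simp
    rw [mul_div_assoc] at this
    linarith [this ▸ (by linarith : γ X ≤ γ X' + 1)]
  have harg' : γ X' ≤ γ X + 2 * (ε / 2) / ε := by
    have : 2 * (ε / 2) / ε = 1 := by field_simp
    linarith [this ▸ (by linarith : γ X' ≤ γ X + 1)]
  have hhalf : (0:ℝ) ≤ ε / 2 := by linarith
  have h1 : pX ≤ Real.exp (ε / 2) * pX' :=
    EPTRAux.relProb_le_exp_mul hε0 hhalf harg
  have h2 : 1 - pX ≤ Real.exp (ε / 2) * (1 - pX') :=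
    EPTRAux.one_sub_relProb_le_exp_mul hε0 hhalf harg'
  set EG : ℝ≥0∞ := ENNReal.ofReal (Real.exp (ε / 2)) with hEGdef
  have hEG1 : 1 ≤ EG := by
    rw [hEGdef, ← ENNReal.ofReal_one]
    exact ENNReal.ofReal_le_ofReal (Real.one_le_exp hhalf)
  have hEE : ENNReal.ofReal (Real.exp ε) = EG * EG := by
    rw [hEGdef, ← ENNReal.ofReal_mul (Real.exp_nonneg _), ← Real.exp_add]
    norm_num
  have hXapp : EPTR.ePTR ε δ α θhat γ πbot X B
      = ENNReal.ofReal pX * EPTR.gaussianE (θhat X) v B + ENNReal.ofReal (1 - pX) * πbot B := by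
    simp [EPTR.ePTR, hvdef, hpXdef]
  have hX'app : EPTR.ePTR ε δ α θhat γ πbot X' B
      = ENNReal.ofReal pX' * EPTR.gaussianE (θhat X') v B
        + ENNReal.ofReal (1 - pX') * πbot B := by
    simp [EPTR.ePTR, hvdef, hpX'def]
  have hpb : ENNReal.ofReal (1 - pX) * πbot B
      ≤ EG * (ENNReal.ofReal (1 - pX') * πbot B) := by
    rw [← mul_assoc, hEGdef, ← ENNReal.ofReal_mul (Real.exp_nonneg _)]
    exact mul_le_mul_left (ENNReal.ofReal_le_ofReal h2) _
  rw [hXapp, hX'app]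
  by_cases hcase : γ X ≤ 1
  · -- small score : the Gaussian part is released with probability at most δ
    have hbound1 : ENNReal.ofReal pX * EPTR.gaussianE (θhat X) v B ≤ ENNReal.ofReal δ := by
      calc ENNReal.ofReal pX * EPTR.gaussianE (θhat X) v B
          ≤ ENNReal.ofReal pX * 1 := mul_le_mul_right prob_le_one _
        _ = ENNReal.ofReal pX := mul_one _
        _ ≤ ENNReal.ofReal δ :=
            ENNReal.ofReal_le_ofReal (EPTRAux.relProb_le_delta hε0 hδ0 hcase)
    calc ENNReal.ofReal pX * EPTR.gaussianE (θhat X) v B + ENNReal.ofReal (1 - pX) * πbot B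
        ≤ ENNReal.ofReal δ + EG * (ENNReal.ofReal (1 - pX') * πbot B) :=
          add_le_add hbound1 hpb
      _ ≤ ENNReal.ofReal δ + (EG * EG) * (ENNReal.ofReal (1 - pX') * πbot B) := by
          refine add_le_add_right (mul_le_mul_left (?_ : EG ≤ EG * EG) _) _
          exact le_mul_of_one_le_left' hEG1
      _ ≤ ENNReal.ofReal (Real.exp ε)
            * (ENNReal.ofReal pX' * EPTR.gaussianE (θhat X') v B
              + ENNReal.ofReal (1 - pX') * πbot B) + ENNReal.ofReal δ := by
          rw [hEE, add_comm]
          gcongr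
          exact le_add_self
  · -- large score : X ∈ G and the Gaussian mechanism is (ε/2, δ)-DP
    push_neg at hcase
    have hXG : X ∈ G := hγG X (by linarith)
    have hsens : ‖θhat X - θhat X'‖ ≤ α := hG X hXG X' hnb
    have hgm := EPTRAux.gaussianE_mech ⟨hε0, hε1⟩ ⟨hδ0, hδ1⟩ hα (θhat X) (θhat X') hsens hB
    have hpX1 : ENNReal.ofReal pX ≤ 1 := by
      rw [← ENNReal.ofReal_one]
      exact ENNReal.ofReal_le_ofReal (EPTRAux.relProb_lt_one ε δ (γ X)).le
    have hpXe : ENNReal.ofReal pX ≤ EG * ENNReal.ofReal pX' := by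
      rw [hEGdef, ← ENNReal.ofReal_mul (Real.exp_nonneg _)]
      exact ENNReal.ofReal_le_ofReal h1
    calc ENNReal.ofReal pX * EPTR.gaussianE (θhat X) v B + ENNReal.ofReal (1 - pX) * πbot B
        ≤ ENNReal.ofReal pX * (EG * EPTR.gaussianE (θhat X') v B + ENNReal.ofReal δ)
            + EG * (ENNReal.ofReal (1 - pX') * πbot B) :=
          add_le_add (mul_le_mul_right hgm _) hpb
      _ = ENNReal.ofReal pX * (EG * EPTR.gaussianE (θhat X') v B)
            + ENNReal.ofReal pX * ENNReal.ofReal δ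
            + EG * (ENNReal.ofReal (1 - pX') * πbot B) := by rw [mul_add]
      _ ≤ (EG * ENNReal.ofReal pX') * (EG * EPTR.gaussianE (θhat X') v B)
            + 1 * ENNReal.ofReal δ
            + (EG * EG) * (ENNReal.ofReal (1 - pX') * πbot B) := by
          refine add_le_add (add_le_add (mul_le_mul_left hpXe _)
            (mul_le_mul_left hpX1 _)) (mul_le_mul_left (le_mul_of_one_le_left' hEG1) _)
      _ = (EG * EG) * (ENNReal.ofReal pX' * EPTR.gaussianE (θhat X') v B
            + ENNReal.ofReal (1 - pX') * πbot B) + ENNReal.ofReal δ := by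
          rw [one_mul, mul_add]
          ring
      _ = ENNReal.ofReal (Real.exp ε)
            * (ENNReal.ofReal pX' * EPTR.gaussianE (θhat X') v B
              + ENNReal.ofReal (1 - pX') * πbot B) + ENNReal.ofReal δ := by rw [hEE]
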